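/- Let g be an isometry of a CAT(0) space X admitting an axis Λ_g (a g-invariant geodesic line on which g acts by translation), and suppose that at some point p ∈ Λ_g the two geodesic sides of Λ_g make an Alexandrov angle strictly greater than π at p in the sense that Λ_g contains no flat half-plane neighborhood. If z ∈ ∂X is a boundary point fixed by g with z ∉ {g^{+∞}, g^{-∞}}, and γ is a geodesic ray from a point of Λ_g to z meeting Λ_g in exactly one point, such that the convex hull of γ ∪ g²γ isometrically embeds in ℝ², then a contradiction arises: hence the only boundary points fixed by g are g^{+∞} and g^{-∞}. -/

import Mathlib

/-- A CAT(0) space: a metric space with midpoints satisfying the CN-inequality of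
Bruhat–Tits (equivalent to the CAT(0) comparison condition for geodesic spaces). -/
def CAT0Space (Y : Type*) [MetricSpace Y] : Prop :=
  (∀ x y : Y, ∃ m : Y, dist x m = dist x y / 2 ∧ dist m y = dist x y / 2) ∧
  (∀ x y z m : Y, dist y m = dist y z / 2 → dist m z = dist y z / 2 →
    dist x m ^ 2 ≤ (dist x y ^ 2 + dist x z ^ 2) / 2 - dist y z ^ 2 / 4)

/-- a geodesically convex subset (closed under midpoints) -/
def GeoConvex {Y : Type*} [MetricSpace Y] (S : Set Y) : Prop :=
  ∀ x ∈ S, ∀ y ∈ S, ∀ m : Y, dist x m = dist x y / 2 → dist m y = dist x y / 2 → m ∈ S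

/-- the (geodesic) convex hull of a subset -/
def geoHull {Y : Type*} [MetricSpace Y] (A : Set Y) : Set Y :=
  ⋂₀ {S : Set Y | GeoConvex S ∧ A ⊆ S}

/-- a geodesic line, parametrized by arclength -/
def IsGeodLine {Y : Type*} [MetricSpace Y] (c : ℝ → Y) : Prop :=
  ∀ s t : ℝ, dist (c s) (c t) = |s - t|

/-- a geodesic ray, parametrized by arclength on `[0, ∞)` -/
def IsGeodRay {Y : Type*} [MetricSpace Y] (γ : ℝ → Y) : Prop :=
  ∀ s t : ℝ, 0 ≤ s → 0 ≤ t → dist (γ s) (γ t) = |s - t|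

/-- a flat half-plane in `Y` attached along the geodesic `c` near the parameter `t₀`:
an isometric copy of a Euclidean half-plane whose boundary line contains the subsegment
`c([t₀ - ε, t₀ + ε])` of the geodesic. -/
def FlatHalfPlaneAlong {Y : Type*} [MetricSpace Y] (c : ℝ → Y) (t₀ : ℝ) : Prop :=
  ∃ (ε : ℝ) (φ : EuclideanSpace ℝ (Fin 2) → Y), 0 < ε ∧
    (∀ u v : EuclideanSpace ℝ (Fin 2), 0 ≤ u 1 → 0 ≤ v 1 →
      dist (φ u) (φ v) = dist u v) ∧
    ∀ t : ℝ, |t - t₀| ≤ ε →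
      φ ((WithLp.equiv 2 (Fin 2 → ℝ)).symm ![t, 0]) = c t

section CAT0helpers
variable {Y : Type*} [MetricSpace Y]

lemma sq_le_imp_le {a b : ℝ} (h : a ^ 2 ≤ b ^ 2) (ha : 0 ≤ a) (hb : 0 ≤ b) : a ≤ b := by
  nlinarith

/-- uniqueness of between-points in a CAT(0) space -/
lemma cat0_between_unique (hY : CAT0Space Y) {x z p q : Y}
    (hsum : dist x p + dist p z = dist x z)
    (hq1 : dist x q = dist x p) (hq2 : dist q z = dist p z) : p = q := by
  obtain ⟨m, hm1, hm2⟩ := hY.1 p q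
  have h1 := hY.2 x p q m hm1 hm2
  have h2 := hY.2 z p q m hm1 hm2
  have t1 : dist x z ≤ dist x m + dist m z := dist_triangle x m z
  have hzp : dist z p = dist p z := dist_comm z p
  have hzq : dist z q = dist q z := dist_comm z q
  have e0 : dist p q = 0 := by
    have hu : 0 ≤ dist x m := dist_nonneg
    have hv : 0 ≤ dist m z := dist_nonneg
    have hs : 0 ≤ dist x p := dist_nonneg
    have hr : 0 ≤ dist p z := dist_nonneg
    have hmz : dist m z = dist z m := dist_comm m z
    rw [hq1] at h1
    rw [hzp, hzq, hq2] at h2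
    rw [hmz] at t1
    have hu2 : dist x m ≤ dist x p := by nlinarith [sq_nonneg (dist p q)]
    have hv2 : dist z m ≤ dist p z := by nlinarith [sq_nonneg (dist p q)]
    nlinarith [dist_nonneg (x := p) (y := q)]
  exact dist_eq_zero.mp e0

/-- CAT(0) midpoint convexity from a common point -/
lemma cat0_mid_dist (hY : CAT0Space Y) {x y z my mz : Y}
    (h1 : dist x my = dist x y / 2) (h2 : dist my y = dist x y / 2)
    (h3 : dist x mz = dist x z / 2) (h4 : dist mz z = dist x z / 2) :
    dist my mz ≤ dist y z / 2 := by
  have hA := hY.2 z x y my h1 h2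
  have hB := hY.2 my x z mz h3 h4
  rw [dist_comm my x, dist_comm my z] at hB
  rw [dist_comm z x, dist_comm z y] at hA
  have h1sq : dist x my ^ 2 = dist x y ^ 2 / 4 := by rw [h1]; ring
  have hsq : dist my mz ^ 2 ≤ (dist y z / 2) ^ 2 := by
    have hzmy : dist z my = dist my z := dist_comm z my
    nlinarith [hA, hB, h1sq]
  exact sq_le_imp_le hsq dist_nonneg (by positivity)

/-- convexity of the distance between two geodesics (midpoint version) -/
lemma cat0_mid4 (hY : CAT0Space Y) {A A' B B' m1 m2 : Y}
    (h1 : dist A m1 = dist A A' / 2) (h2 : dist m1 A' = dist A A' / 2)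
    (h3 : dist B m2 = dist B B' / 2) (h4 : dist m2 B' = dist B B' / 2) :
    dist m1 m2 ≤ dist A B / 2 + dist A' B' / 2 := by
  obtain ⟨zz, hz1, hz2⟩ := hY.1 A' B
  have d1 : dist m1 zz ≤ dist A B / 2 := by
    refine cat0_mid_dist hY (x := A') (y := A) (z := B) ?_ ?_ hz1 hz2
    · rw [dist_comm A' m1, dist_comm A' A]; exact h2
    · rw [dist_comm m1 A, dist_comm A' A]; exact h1
  have d2 : dist zz m2 ≤ dist A' B' / 2 := by
    refine cat0_mid_dist hY (x := B) (y := A') (z := B') ?_ ?_ h3 h4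
    · rw [dist_comm B zz, dist_comm B A']; exact hz2
    · rw [dist_comm zz A', dist_comm B A']; exact hz1
  calc dist m1 m2 ≤ dist m1 zz + dist zz m2 := dist_triangle _ _ _
    _ ≤ _ := by linarith

/-- chain of aligned points in a CAT(0) space -/
lemma cat0_chain (hY : CAT0Space Y) (p : ℕ → Y) (δ : ℝ) :
    ∀ n : ℕ, (∀ k, k + 1 ≤ n → dist (p k) (p (k+1)) = δ) →
      (∀ k, k + 2 ≤ n → dist (p k) (p (k+2)) = 2*δ) →
      dist (p 0) (p n) = n * δ := by
  intro n
  induction n using Nat.strong_induction_on with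
  | _ n ih =>
    match n with
    | 0 => intro _ _; simp
    | 1 => intro h1 _; simpa using h1 0 le_rfl
    | (m+2) =>
      intro h1 h2
      have hδ : 0 ≤ δ := by
        have := h1 0 (by omega); rw [← this]; exact dist_nonneg
      have ihm : dist (p 0) (p m) = m * δ :=
        ih m (by omega) (fun k hk => h1 k (by omega)) (fun k hk => h2 k (by omega))
      have ihm1 : dist (p 0) (p (m+1)) = ((m:ℝ)+1) * δ := by
        have h := ih (m+1) (by omega) (fun k hk => h1 k (by omega)) (fun k hk => h2 k (by omega))
        push_cast at h; exact h
      have hcn := hY.2 (p 0) (p m) (p (m+2)) (p (m+1))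
        (by rw [h1 m (by omega), h2 m (by omega)]; ring)
        (by rw [h1 (m+1) (by omega), h2 m (by omega)]; ring)
      rw [ihm, ihm1, h2 m (by omega)] at hcn
      have hub : dist (p 0) (p (m+2)) ≤ (m+2) * δ := by
        have := dist_triangle (p 0) (p (m+1)) (p (m+2))
        rw [ihm1, h1 (m+1) (by omega)] at this
        push_cast
        push_cast at this
        linarith
      have hlb : ((m:ℝ)+2) * δ ≤ dist (p 0) (p (m+2)) := by
        have h0 : (0:ℝ) ≤ ((m:ℝ)+2) * δ := by positivity
        refine sq_le_imp_le ?_ h0 dist_nonneg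
        push_cast at hcn ⊢
        nlinarith
      push_cast
      push_cast at hub
      linarith
end CAT0helpers

section EuclHelpers
open scoped RealInnerProductSpace
variable {E : Type*} [NormedAddCommGroup E] [InnerProductSpace ℝ E]

/-- in an inner product space, a between-point lies on the segment -/
lemma eucl_between {x z y : E} {s : ℝ}
    (h1 : dist x y = s) (h2 : dist y z = dist x z - s) :
    y = x + (s / dist x z) • (z - x) := by
  rcases eq_or_ne x z with rfl | hxz
  · simp only [dist_self] at h2
    rw [dist_comm y x] at h2
    have h0 : dist x y = 0 := by linarith [h1, h2]
    have hxy : y = x := (dist_eq_zero.mp h0).symm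
    simp [hxy]
  · set D := dist x z with hD
    have hD0 : 0 < D := dist_pos.mpr hxz
    have hyx : ‖y - x‖ = s := by rw [← dist_eq_norm, dist_comm y x, h1]
    have hzx : ‖z - x‖ = D := by rw [← dist_eq_norm, dist_comm z x]
    have hin : (inner ℝ (y - x) (z - x) : ℝ) = s * D := by
      have hzy : ‖z - y‖ ^ 2 = (D - s) ^ 2 := by
        rw [← dist_eq_norm, dist_comm z y, h2]
      have hexp : ‖(z - x) - (y - x)‖ ^ 2 = ‖z - x‖ ^ 2 - 2 * (inner ℝ (z - x) (y - x) : ℝ) + ‖y - x‖ ^ 2 :=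
        norm_sub_sq_real _ _
      have he : (z - x) - (y - x) = z - y := by abel
      rw [he, hzy, hzx, hyx] at hexp
      rw [real_inner_comm]
      nlinarith
    have hnorm : ‖(y - x) - (s / D) • (z - x)‖ ^ 2 = 0 := by
      have hexp : ‖(y - x) - (s / D) • (z - x)‖ ^ 2
          = ‖y - x‖ ^ 2 - 2 * (inner ℝ (y - x) ((s / D) • (z - x)) : ℝ) + ‖(s / D) • (z - x)‖ ^ 2 :=
        norm_sub_sq_real _ _
      have h2' : (inner ℝ (y - x) ((s / D) • (z - x)) : ℝ) = (s / D) * (s * D) := by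
        rw [real_inner_smul_right, hin]
      have h3' : ‖(s / D) • (z - x)‖ ^ 2 = (s / D) ^ 2 * D ^ 2 := by
        rw [norm_smul, hzx, mul_pow, Real.norm_eq_abs, sq_abs]
      rw [hexp, hyx, h2', h3']
      field_simp
      ring
    have hv : (y - x) - (s / D) • (z - x) = 0 :=
      norm_eq_zero.mp (by exact pow_eq_zero_iff (n := 2) (by norm_num) |>.mp hnorm)
    have hv2 : y - x = (s / D) • (z - x) := sub_eq_zero.mp hv
    rw [sub_eq_iff_eq_add.mp hv2, add_comm]

/-- midpoints in an inner product space -/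
lemma eucl_mid {x y m : E} (h1 : dist x m = dist x y / 2) (h2 : dist m y = dist x y / 2) :
    m = x + (2⁻¹ : ℝ) • (y - x) := by
  rcases eq_or_ne x y with rfl | hxy
  · simp only [dist_self, zero_div] at h1
    have : m = x := by rw [dist_comm] at h1; exact dist_eq_zero.mp h1
    simp [this]
  · have hD0 : 0 < dist x y := dist_pos.mpr hxy
    have := eucl_between (x := x) (z := y) (y := m) (s := dist x y / 2) h1 (by rw [h2]; ring)
    rw [this]
    congr 1
    congr 1
    field_simp
end EuclHelpers

set_option maxHeartbeats 1000000 in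
/-- let `g` be an isometry of a complete CAT(0) space with an axis `c = Λ_g`
(on which `g` acts as a translation) which admits no flat half-plane neighborhood (the
angle condition: consecutive sides of the axis make angle `> π`).  If `z ∈ ∂Y ∖ {g^{±∞}}`
(represented by a ray `γ` which starts on `Λ_g`, meets `Λ_g` exactly once, and does not
stay at bounded distance from `Λ_g`) is fixed by `g` (i.e. `gγ` is asymptotic to `γ`) and
the convex hull of `γ ∪ g²γ` isometrically embeds in the Euclidean plane, then a
contradiction arises; hence the only boundary points fixed by `g` are `g^{±∞}`. -/
theorem stmt5 {Y : Type*} [MetricSpace Y] [CompleteSpace Y] (hY : CAT0Space Y)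
    (g : Y ≃ᵢ Y) (c : ℝ → Y) (hc : IsGeodLine c)
    (τ : ℝ) (hτ : 0 < τ) (haxis : ∀ t : ℝ, g (c t) = c (t + τ))
    (hangle : ∀ t₀ : ℝ, ¬ FlatHalfPlaneAlong c t₀)
    (γ : ℝ → Y) (hγ : IsGeodRay γ)
    (hstart : γ 0 ∈ Set.range c)
    (hmeet : ∀ t : ℝ, 0 ≤ t → γ t ∈ Set.range c → t = 0)
    (hnotaxisend : ¬ ∃ C : ℝ, ∀ t : ℝ, 0 ≤ t → Metric.infDist (γ t) (Set.range c) ≤ C)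
    (hfixed : ∃ C : ℝ, ∀ t : ℝ, 0 ≤ t → dist (γ t) (g (γ t)) ≤ C)
    (hflat : ∃ φ : Y → EuclideanSpace ℝ (Fin 2),
      ∀ p ∈ geoHull (γ '' Set.Ici (0:ℝ) ∪ (g ∘ g) '' (γ '' Set.Ici (0:ℝ))),
        ∀ q ∈ geoHull (γ '' Set.Ici (0:ℝ) ∪ (g ∘ g) '' (γ '' Set.Ici (0:ℝ))),
          dist (φ p) (φ q) = dist p q) :
    False := by
  classical
  obtain ⟨φ, hφ0⟩ := hflat
  obtain ⟨C, hC⟩ := hfixed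
  obtain ⟨s₀, hs₀⟩ := hstart
  have hC0 : 0 ≤ C := le_trans dist_nonneg (hC 0 le_rfl)
  set H : Set Y := geoHull (γ '' Set.Ici (0:ℝ) ∪ (g ∘ g) '' (γ '' Set.Ici (0:ℝ))) with hHdef
  have hφ : ∀ p ∈ H, ∀ q ∈ H, dist (φ p) (φ q) = dist p q := hφ0
  have hmemH : ∀ x : Y, x ∈ H ↔ ∀ S : Set Y, (GeoConvex S ∧
      (γ '' Set.Ici (0:ℝ) ∪ (g ∘ g) '' (γ '' Set.Ici (0:ℝ))) ⊆ S) → x ∈ S := by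
    intro x
    rw [hHdef]
    unfold geoHull
    exact Set.mem_sInter
  have hHconv : GeoConvex H := by
    intro x hx y hy m h1 h2
    rw [hmemH] at *
    intro S hS
    exact hS.1 x (hx S hS) y (hy S hS) m h1 h2
  have hγH : ∀ t : ℝ, 0 ≤ t → γ t ∈ H := by
    intro t ht
    rw [hmemH]
    intro S hS
    exact hS.2 (Set.mem_union_left _ ⟨t, ht, rfl⟩)
  have hg2H : ∀ t : ℝ, 0 ≤ t → g (g (γ t)) ∈ H := by
    intro t ht
    rw [hmemH]
    intro S hS
    exact hS.2 (Set.mem_union_right _ ⟨γ t, ⟨t, ht, rfl⟩, rfl⟩)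
  have hmidH : ∀ x, x ∈ H → ∀ y, y ∈ H → ∃ m, m ∈ H ∧ dist x m = dist x y / 2 ∧
      dist m y = dist x y / 2 := by
    intro x hx y hy
    obtain ⟨m, hm1, hm2⟩ := hY.1 x y
    exact ⟨m, hHconv x hx y hy m hm1 hm2, hm1, hm2⟩
  have hφinj : ∀ x, x ∈ H → ∀ y, y ∈ H → φ x = φ y → x = y := by
    intro x hx y hy hxy
    have := hφ x hx y hy
    rw [hxy, dist_self] at this
    exact (dist_eq_zero.mp this.symm)
  -- basic axis facts
  have hγ2c : g (g (γ 0)) = c (s₀ + τ + τ) := by rw [← hs₀, haxis, haxis]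
  have d0 : dist (γ 0) (g (g (γ 0))) = 2*τ := by
    rw [hγ2c, ← hs₀, hc]
    rw [show s₀ - (s₀ + τ + τ) = -(2*τ) by ring, abs_neg, abs_of_pos (by linarith)]
  -- rays in the plane are affine
  have hrayaff : ∀ r : ℝ → EuclideanSpace ℝ (Fin 2),
      (∀ s t : ℝ, 0 ≤ s → 0 ≤ t → dist (r s) (r t) = |s - t|) →
      ∀ t : ℝ, 0 ≤ t → r t = r 0 + t • (r 1 - r 0) := by
    intro r hr t ht
    set T : ℝ := max t 1 with hT
    have hT1 : (1:ℝ) ≤ T := le_max_right _ _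
    have htT : t ≤ T := le_max_left _ _
    have hT0 : (0:ℝ) ≤ T := by linarith
    have hTne : T ≠ 0 := by intro h; rw [h] at hT1; linarith
    have hrT : dist (r 0) (r T) = T := by
      rw [hr 0 T le_rfl hT0, zero_sub, abs_neg, abs_of_nonneg hT0]
    have h1 : dist (r 0) (r t) = t := by
      rw [hr 0 t le_rfl ht, zero_sub, abs_neg, abs_of_nonneg ht]
    have h2 : dist (r t) (r T) = dist (r 0) (r T) - t := by
      rw [hr t T ht hT0, hrT, abs_of_nonpos (by linarith)]; ring
    have hbt := eucl_between h1 h2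
    have h1' : dist (r 0) (r 1) = 1 := by
      rw [hr 0 1 le_rfl zero_le_one, zero_sub, abs_neg, abs_one]
    have h2' : dist (r 1) (r T) = dist (r 0) (r T) - 1 := by
      rw [hr 1 T zero_le_one hT0, hrT, abs_of_nonpos (by linarith)]; ring
    have hbt1 := eucl_between h1' h2'
    rw [hrT] at hbt hbt1
    have hv : r 1 - r 0 = (1 / T) • (r T - r 0) := by rw [hbt1]; abel
    rw [hbt, hv, smul_smul, mul_one_div]
  -- the two rays, made affine
  have hrγd : ∀ s t : ℝ, 0 ≤ s → 0 ≤ t → dist (φ (γ s)) (φ (γ t)) = |s - t| := by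
    intro s t hs ht
    rw [hφ _ (hγH s hs) _ (hγH t ht), hγ s t hs ht]
  have hrγ2d : ∀ s t : ℝ, 0 ≤ s → 0 ≤ t →
      dist (φ (g (g (γ s)))) (φ (g (g (γ t)))) = |s - t| := by
    intro s t hs ht
    rw [hφ _ (hg2H s hs) _ (hg2H t ht), g.dist_eq, g.dist_eq, hγ s t hs ht]
  set a : EuclideanSpace ℝ (Fin 2) := φ (γ 0) with ha
  set v : EuclideanSpace ℝ (Fin 2) := φ (γ 1) - φ (γ 0) with hvdef
  have haff1 : ∀ t : ℝ, 0 ≤ t → φ (γ t) = a + t • v :=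
    hrayaff (fun t => φ (γ t)) hrγd
  have hnv : ‖v‖ = 1 := by
    rw [hvdef, ← dist_eq_norm, dist_comm, hrγd 0 1 le_rfl zero_le_one]
    norm_num
  set b₀ : EuclideanSpace ℝ (Fin 2) := φ (g (g (γ 0))) with hb₀def
  set u : EuclideanSpace ℝ (Fin 2) := φ (g (g (γ 1))) - φ (g (g (γ 0))) with hudef
  have haff2 : ∀ t : ℝ, 0 ≤ t → φ (g (g (γ t))) = b₀ + t • u :=
    hrayaff (fun t => φ (g (g (γ t)))) hrγ2d
  -- boundedness gives u = v
  have hbd : ∀ t : ℝ, 0 ≤ t → dist (γ t) (g (g (γ t))) ≤ 2*C := by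
    intro t ht
    have h1 : dist (g (γ t)) (g (g (γ t))) = dist (γ t) (g (γ t)) := g.dist_eq _ _
    calc dist (γ t) (g (g (γ t))) ≤ dist (γ t) (g (γ t)) + dist (g (γ t)) (g (g (γ t))) :=
          dist_triangle _ _ _
      _ ≤ 2*C := by rw [h1]; linarith [hC t ht]
  have huv : u = v := by
    by_contra hne
    have hd0 : 0 < ‖v - u‖ := by
      rw [norm_pos_iff, sub_ne_zero]
      exact fun h => hne h.symm
    set K : ℝ := 2*C + ‖a - b₀‖ with hK
    have hK0 : 0 ≤ K := by positivity
    have hbK : ∀ t : ℝ, 0 ≤ t → ‖t • (v - u)‖ ≤ K := by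
      intro t ht
      have e1 : t • (v - u) = (φ (γ t) - φ (g (g (γ t)))) - (a - b₀) := by
        rw [haff1 t ht, haff2 t ht, smul_sub]; abel
      rw [e1]
      calc ‖(φ (γ t) - φ (g (g (γ t)))) - (a - b₀)‖
          ≤ ‖φ (γ t) - φ (g (g (γ t)))‖ + ‖a - b₀‖ := norm_sub_le _ _
        _ ≤ K := by
            rw [hK, ← dist_eq_norm]
            have := hφ _ (hγH t ht) _ (hg2H t ht)
            rw [this]
            linarith [hbd t ht]
    have := hbK ((K+1)/‖v - u‖) (by positivity)
    rw [norm_smul, Real.norm_eq_abs, abs_of_nonneg (by positivity)] at this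
    rw [div_mul_cancel₀ _ (ne_of_gt hd0)] at this
    linarith
  -- the direction w along the axis
  have hba : ‖b₀ - a‖ = 2*τ := by
    rw [← dist_eq_norm, hb₀def, ha, hφ _ (hg2H 0 le_rfl) _ (hγH 0 le_rfl), dist_comm, d0]
  set w : EuclideanSpace ℝ (Fin 2) := (2*τ)⁻¹ • (b₀ - a) with hwdef
  have h2τ : (2*τ) ≠ 0 := by positivity
  have hb₀a : b₀ - a = (2*τ) • w := by
    rw [hwdef, smul_smul, mul_inv_cancel₀ h2τ, one_smul]
  have hb₀' : b₀ = a + (2*τ) • w := by rw [← hb₀a]; abel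
  have hnw : ‖w‖ = 1 := by
    rw [hwdef, norm_smul, hba, Real.norm_eq_abs, abs_of_pos (by positivity)]
    field_simp
  set Pt : ℝ → ℝ → EuclideanSpace ℝ (Fin 2) := fun s t => a + s • w + t • v with hPtdef
  have hPtd : ∀ s t s' t' : ℝ, dist (Pt s t) (Pt s' t') = ‖(s - s') • w + (t - t') • v‖ := by
    intro s t s' t'
    simp only [hPtdef]
    rw [dist_eq_norm]
    congr 1
    rw [sub_smul, sub_smul]
    abel
  have hφγP : ∀ t : ℝ, 0 ≤ t → φ (γ t) = Pt 0 t := by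
    intro t ht
    simp only [hPtdef]
    rw [haff1 t ht, zero_smul, add_zero]
  have hφγ2P : ∀ t : ℝ, 0 ≤ t → φ (g (g (γ t))) = Pt (2*τ) t := by
    intro t ht
    simp only [hPtdef]
    rw [haff2 t ht, huv, hb₀']
  -- dyadic points of segments are in the hull (in the planar picture)
  have hdy : ∀ x, x ∈ H → ∀ y, y ∈ H → ∀ k j : ℕ, j ≤ 2^k →
      ∃ h, h ∈ H ∧ φ h = φ x + ((j : ℝ)/2^k) • (φ y - φ x) := by
    intro x hx y hy k
    induction k with
    | zero =>
      intro j hj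
      interval_cases j
      · exact ⟨x, hx, by simp⟩
      · exact ⟨y, hy, by simp⟩
    | succ k ih =>
      intro j hj
      have hps : (2:ℕ)^(k+1) = 2^k + 2^k := by rw [pow_succ]; omega
      rcases Nat.even_or_odd j with ⟨i, hi⟩ | ⟨i, hi⟩
      · obtain ⟨h, hh, he⟩ := ih i (by omega)
        refine ⟨h, hh, ?_⟩
        rw [he]
        congr 2
        rw [hi]
        push_cast
        rw [pow_succ]
        have h2k : ((2:ℝ))^k ≠ 0 := by positivity
        field_simp
        ring
      · obtain ⟨h₁, hh₁, he₁⟩ := ih i (by omega)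
        obtain ⟨h₂, hh₂, he₂⟩ := ih (i+1) (by omega)
        obtain ⟨m, hm, hm1, hm2⟩ := hmidH h₁ hh₁ h₂ hh₂
        have hd12 : dist (φ h₁) (φ h₂) = dist h₁ h₂ := hφ _ hh₁ _ hh₂
        have hφm : φ m = φ h₁ + (2⁻¹ : ℝ) • (φ h₂ - φ h₁) := by
          apply eucl_mid
          · rw [hφ _ hh₁ _ hm, hd12]; exact hm1
          · rw [hφ _ hm _ hh₂, hd12]; exact hm2
        refine ⟨m, hm, ?_⟩
        rw [hφm, he₁, he₂]
        have key : ∀ (X D : EuclideanSpace ℝ (Fin 2)) (c₁ c₂ : ℝ),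
            (X + c₁ • D) + (2⁻¹:ℝ) • ((X + c₂ • D) - (X + c₁ • D)) = X + ((c₁ + c₂)/2) • D := by
          intro X D c₁ c₂
          have e1 : (X + c₂ • D) - (X + c₁ • D) = (c₂ - c₁) • D := by
            rw [sub_smul]; abel
          rw [e1, smul_smul]
          have e2 : (X + c₁ • D) + (2⁻¹ * (c₂ - c₁)) • D = X + (c₁ + 2⁻¹ * (c₂ - c₁)) • D := by
            rw [add_smul]; abel
          rw [e2]
          congr 2
          ring
        rw [key]
        congr 2
        rw [hi]
        push_cast
        rw [pow_succ]
        have h2k : ((2:ℝ))^k ≠ 0 := by positivity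
        field_simp
        ring
  -- density of the hull in the planar strip
  have hdense : ∀ s t : ℝ, 0 ≤ s → s ≤ 2*τ → 0 ≤ t → ∀ ε : ℝ, 0 < ε →
      ∃ h, h ∈ H ∧ dist (φ h) (Pt s t) < ε := by
    intro s t hs hs2 ht ε hε
    obtain ⟨k, hk⟩ := pow_unbounded_of_one_lt (R := ℝ) ((2*τ)/ε) one_lt_two
    have hpk : (0:ℝ) < 2^k := by positivity
    set lam : ℝ := s / (2*τ) with hlam
    have hlam0 : 0 ≤ lam := by positivity
    have hlam1 : lam ≤ 1 := by rw [hlam, div_le_one (by positivity)]; linarith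
    set j : ℕ := ⌊lam * 2^k⌋₊ with hjdef
    have hjle : j ≤ 2^k := by
      have h1 : lam * 2^k ≤ ((2^k : ℕ) : ℝ) := by
        push_cast
        nlinarith
      calc j ≤ ⌊((2^k : ℕ) : ℝ)⌋₊ := Nat.floor_mono h1
        _ = 2^k := Nat.floor_natCast _
    have ha' : ((j:ℝ)) ≤ lam * 2^k := Nat.floor_le (by positivity)
    have hb' : lam * 2^k < (j:ℝ) + 1 := Nat.lt_floor_add_one _
    have e1 : (j:ℝ)/2^k ≤ lam := by rw [div_le_iff₀ hpk]; exact ha'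
    have e2 : lam ≤ (j:ℝ)/2^k + 1/2^k := by
      rw [← add_div, le_div_iff₀ hpk]; linarith
    obtain ⟨h, hh, he⟩ := hdy (γ t) (hγH t ht) (g (g (γ t))) (hg2H t ht) k j hjle
    refine ⟨h, hh, ?_⟩
    rw [he, hφγP t ht, hφγ2P t ht]
    have hsub : Pt 0 t + ((j:ℝ)/2^k) • (Pt (2*τ) t - Pt 0 t) - Pt s t
        = (((j:ℝ)/2^k)*(2*τ) - s) • w := by
      simp only [hPtdef]
      module
    rw [dist_eq_norm, hsub, norm_smul, hnw, mul_one, Real.norm_eq_abs]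
    have hseq : s = lam * (2*τ) := by rw [hlam]; field_simp
    have habs : |((j:ℝ)/2^k)*(2*τ) - s| ≤ (1/2^k) * (2*τ) := by
      have h2τ0 : (0:ℝ) ≤ 2*τ := by linarith
      have m1 := mul_le_mul_of_nonneg_right e1 h2τ0
      have m2 := mul_le_mul_of_nonneg_right e2 h2τ0
      rw [add_mul] at m2
      rw [hseq, abs_le]
      constructor <;> linarith
    have hlast : (1/2^k) * (2*τ) < ε := by
      rw [div_lt_iff₀ hε] at hk
      have hco : (1/2^k) * (2:ℝ)^k = 1 := by field_simp
      nlinarith [hk, hco, hpk]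
    linarith
  -- construction of the chart ψ on the strip, via completeness
  have hψex : ∀ s t : ℝ, ∃ yy : Y, (0 ≤ s → s ≤ 2*τ → 0 ≤ t →
      ∀ z, z ∈ H → dist yy z = dist (Pt s t) (φ z)) := by
    intro s t
    by_cases hst : 0 ≤ s ∧ s ≤ 2*τ ∧ 0 ≤ t
    · obtain ⟨hs, hs2, ht⟩ := hst
      have hseq : ∀ n : ℕ, ∃ h, h ∈ H ∧ dist (φ h) (Pt s t) < 1/(n+1) :=
        fun n => hdense s t hs hs2 ht _ (by positivity)
      choose f hfH hfd using hseq
      have hcauchy : CauchySeq f := by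
        rw [Metric.cauchySeq_iff']
        intro ε hε
        obtain ⟨N, hN⟩ := exists_nat_gt (2/ε)
        refine ⟨N, fun n hn => ?_⟩
        have h1 : dist (f n) (f N) = dist (φ (f n)) (φ (f N)) := (hφ _ (hfH n) _ (hfH N)).symm
        have h2 : dist (φ (f n)) (φ (f N)) ≤ dist (φ (f n)) (Pt s t) + dist (Pt s t) (φ (f N)) :=
          dist_triangle _ _ _
        have h3 : dist (Pt s t) (φ (f N)) < 1/(N+1) := by rw [dist_comm]; exact hfd N
        have h4 : dist (φ (f n)) (Pt s t) < 1/(n+1) := hfd n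
        have h5 : 1/((n:ℝ)+1) ≤ 1/((N:ℝ)+1) := by
          apply one_div_le_one_div_of_le (by positivity)
          have : (N:ℝ) ≤ (n:ℝ) := by exact_mod_cast hn
          linarith
        have h6 : 2/((N:ℝ)+1) < ε := by
          have hN2 : 0 < (N:ℝ)+1 := by positivity
          rw [div_lt_iff₀ hN2]
          rw [div_lt_iff₀ hε] at hN
          nlinarith
        have h7 : 2/((N:ℝ)+1) = 1/((N:ℝ)+1) + 1/((N:ℝ)+1) := by ring
        rw [h1]
        linarith
      obtain ⟨yy, hyy⟩ := cauchySeq_tendsto_of_complete hcauchy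
      refine ⟨yy, fun _ _ _ z hz => ?_⟩
      have l1 : Filter.Tendsto (fun n => dist (f n) z) Filter.atTop (nhds (dist yy z)) :=
        hyy.dist tendsto_const_nhds
      have l2 : Filter.Tendsto (fun n => dist (f n) z) Filter.atTop
          (nhds (dist (Pt s t) (φ z))) := by
        have e1 : (fun n => dist (f n) z) = fun n => dist (φ (f n)) (φ z) := by
          funext n; exact (hφ _ (hfH n) _ hz).symm
        rw [e1]
        have l3 : Filter.Tendsto (fun n => φ (f n)) Filter.atTop (nhds (Pt s t)) := by
          rw [tendsto_iff_dist_tendsto_zero]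
          apply squeeze_zero (fun n => dist_nonneg) (fun n => (hfd n).le)
          exact tendsto_one_div_add_atTop_nhds_zero_nat
        exact l3.dist tendsto_const_nhds
      exact tendsto_nhds_unique l1 l2
    · exact ⟨γ 0, fun h1 h2 h3 => absurd ⟨h1, h2, h3⟩ hst⟩
  choose ψ hψ using hψex
  -- distances between chart points
  have hψd : ∀ s t s' t' : ℝ, 0 ≤ s → s ≤ 2*τ → 0 ≤ t → 0 ≤ s' → s' ≤ 2*τ → 0 ≤ t' →
      dist (ψ s t) (ψ s' t') = dist (Pt s t) (Pt s' t') := by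
    intro s t s' t' hs hs2 ht hs' hs2' ht'
    have key : ∀ ε : ℝ, 0 < ε →
        |dist (ψ s t) (ψ s' t') - dist (Pt s t) (Pt s' t')| ≤ 2*ε := by
      intro ε hε
      obtain ⟨h, hh, he⟩ := hdense s' t' hs' hs2' ht' ε hε
      have e1 : dist (ψ s t) h = dist (Pt s t) (φ h) := hψ s t hs hs2 ht h hh
      have e2 : dist (ψ s' t') h = dist (Pt s' t') (φ h) := hψ s' t' hs' hs2' ht' h hh
      have t1 : |dist (ψ s t) (ψ s' t') - dist (ψ s t) h| ≤ dist (ψ s' t') h := by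
        rw [dist_comm (ψ s t) (ψ s' t'), dist_comm (ψ s t) h]
        exact abs_dist_sub_le _ _ _
      have t2 : |dist (Pt s t) (φ h) - dist (Pt s t) (Pt s' t')| ≤ dist (φ h) (Pt s' t') := by
        rw [dist_comm (Pt s t) (φ h), dist_comm (Pt s t) (Pt s' t')]
        exact abs_dist_sub_le _ _ _
      have he2 : dist (ψ s' t') h < ε := by rw [e2, dist_comm (Pt s' t') (φ h)]; exact he
      calc |dist (ψ s t) (ψ s' t') - dist (Pt s t) (Pt s' t')|
          ≤ |dist (ψ s t) (ψ s' t') - dist (ψ s t) h|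
            + |dist (ψ s t) h - dist (Pt s t) (Pt s' t')| := abs_sub_le _ _ _
        _ ≤ 2*ε := by
            have t1' : |dist (ψ s t) (ψ s' t') - dist (ψ s t) h| < ε :=
              lt_of_le_of_lt t1 he2
            have t2' : |dist (ψ s t) h - dist (Pt s t) (Pt s' t')| < ε := by
              rw [e1]
              exact lt_of_le_of_lt t2 he
            linarith
    have h0 : |dist (ψ s t) (ψ s' t') - dist (Pt s t) (Pt s' t')| ≤ 0 := by
      by_contra hpos
      push_neg at hpos
      have := key (|dist (ψ s t) (ψ s' t') - dist (Pt s t) (Pt s' t')|/4) (by linarith)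
      linarith
    have := abs_nonneg (dist (ψ s t) (ψ s' t') - dist (Pt s t) (Pt s' t'))
    have heq : |dist (ψ s t) (ψ s' t') - dist (Pt s t) (Pt s' t')| = 0 := le_antisymm h0 this
    rw [abs_eq_zero, sub_eq_zero] at heq
    exact heq
  have hψz : ∀ s t : ℝ, 0 ≤ s → s ≤ 2*τ → 0 ≤ t → ∀ z, z ∈ H → φ z = Pt s t → ψ s t = z := by
    intro s t hs hs2 ht z hz hφz
    have := hψ s t hs hs2 ht z hz
    rw [hφz, dist_self] at this
    exact dist_eq_zero.mp this
  have hψγ : ∀ t : ℝ, 0 ≤ t → ψ 0 t = γ t :=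
    fun t ht => hψz 0 t le_rfl (by linarith) ht (γ t) (hγH t ht) (hφγP t ht)
  have hψγ2 : ∀ t : ℝ, 0 ≤ t → ψ (2*τ) t = g (g (γ t)) :=
    fun t ht => hψz (2*τ) t (by linarith) le_rfl ht _ (hg2H t ht) (hφγ2P t ht)
  -- the midpoint of the two ray origins is on the axis
  obtain ⟨mc, hmcH, hmc1, hmc2⟩ := hmidH (γ 0) (hγH 0 le_rfl) (g (g (γ 0))) (hg2H 0 le_rfl)
  have hdca : dist (γ 0) (c (s₀ + τ)) = τ := by
    rw [← hs₀, hc, show s₀ - (s₀ + τ) = -τ by ring, abs_neg, abs_of_pos hτ]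
  have hdcb : dist (c (s₀ + τ)) (g (g (γ 0))) = τ := by
    rw [hγ2c, hc, show s₀ + τ - (s₀ + τ + τ) = -τ by ring, abs_neg, abs_of_pos hτ]
  have hmceq : mc = c (s₀ + τ) := by
    apply cat0_between_unique hY (x := γ 0) (z := g (g (γ 0)))
    · rw [hmc1, hmc2]; ring
    · rw [hdca, hmc1, d0]; ring
    · rw [hdcb, hmc2, d0]; ring
  have hcmH : c (s₀ + τ) ∈ H := hmceq ▸ hmcH
  have hφmc : φ (c (s₀ + τ)) = Pt τ 0 := by
    rw [← hmceq]
    have e1 := eucl_mid (x := φ (γ 0)) (y := φ (g (g (γ 0)))) (m := φ mc)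
      (by rw [hφ _ (hγH 0 le_rfl) _ hmcH, hφ _ (hγH 0 le_rfl) _ (hg2H 0 le_rfl)]; exact hmc1)
      (by rw [hφ _ hmcH _ (hg2H 0 le_rfl), hφ _ (hγH 0 le_rfl) _ (hg2H 0 le_rfl)]; exact hmc2)
    rw [e1, hφγP 0 le_rfl, hφγ2P 0 le_rfl]
    simp only [hPtdef]
    module
  -- the bottom of the strip is the axis segment
  have hψbot : ∀ s : ℝ, 0 ≤ s → s ≤ 2*τ → ψ s 0 = c (s₀ + s) := by
    intro s hs hs2
    apply cat0_between_unique hY (x := γ 0) (z := g (g (γ 0))) (p := ψ s 0) (q := c (s₀ + s))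
    · have e1 : dist (γ 0) (ψ s 0) = s := by
        rw [dist_comm, hψ s 0 hs hs2 le_rfl (γ 0) (hγH 0 le_rfl), hφγP 0 le_rfl, hPtd]
        rw [show s - 0 = s by ring, show (0:ℝ) - 0 = 0 by ring, zero_smul, add_zero,
          norm_smul, hnw, mul_one, Real.norm_eq_abs, abs_of_nonneg hs]
      have e2 : dist (ψ s 0) (g (g (γ 0))) = 2*τ - s := by
        rw [hψ s 0 hs hs2 le_rfl _ (hg2H 0 le_rfl), hφγ2P 0 le_rfl, hPtd]
        rw [show (0:ℝ) - 0 = 0 by ring, zero_smul, add_zero, norm_smul, hnw, mul_one,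
          Real.norm_eq_abs, abs_of_nonpos (by linarith)]
        ring
      rw [e1, e2, d0]; ring
    · have e1 : dist (γ 0) (ψ s 0) = s := by
        rw [dist_comm, hψ s 0 hs hs2 le_rfl (γ 0) (hγH 0 le_rfl), hφγP 0 le_rfl, hPtd]
        rw [show s - 0 = s by ring, show (0:ℝ) - 0 = 0 by ring, zero_smul, add_zero,
          norm_smul, hnw, mul_one, Real.norm_eq_abs, abs_of_nonneg hs]
      rw [e1, ← hs₀, hc, show s₀ - (s₀ + s) = -s by ring, abs_neg, abs_of_nonneg hs]
    · have e2 : dist (ψ s 0) (g (g (γ 0))) = 2*τ - s := by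
        rw [hψ s 0 hs hs2 le_rfl _ (hg2H 0 le_rfl), hφγ2P 0 le_rfl, hPtd]
        rw [show (0:ℝ) - 0 = 0 by ring, zero_smul, add_zero, norm_smul, hnw, mul_one,
          Real.norm_eq_abs, abs_of_nonpos (by linarith)]
        ring
      rw [e2, hγ2c, hc, show s₀ + s - (s₀ + τ + τ) = -(2*τ - s) by ring, abs_neg,
        abs_of_nonneg (by linarith)]
  -- gγ is the middle ray of the strip
  have hτ2 : τ ≤ 2*τ := by linarith
  have hψmid : ∀ s' t t' : ℝ, 0 ≤ s' → s' ≤ 2*τ → 0 ≤ t → 0 ≤ t' →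
      dist (ψ s' t) (ψ s' t') = |t - t'| := by
    intro s' t t' hs' hs2' ht ht'
    rw [hψd s' t s' t' hs' hs2' ht hs' hs2' ht', hPtd, sub_self, zero_smul, zero_add,
      norm_smul, hnv, mul_one, Real.norm_eq_abs]
  have hγψd : ∀ s' t t' : ℝ, 0 ≤ s' → s' ≤ 2*τ → 0 ≤ t → 0 ≤ t' →
      dist (γ t) (ψ s' t') = ‖(0 - s') • w + (t - t') • v‖ := by
    intro s' t t' hs' hs2' ht ht'
    rw [show γ t = ψ 0 t from (hψγ t ht).symm,
      hψd 0 t s' t' le_rfl (by linarith) ht hs' hs2' ht', hPtd]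
  have hgγψ : ∀ t : ℝ, 0 ≤ t → g (γ t) = ψ τ t := by
    have hbound : ∀ t : ℝ, 0 ≤ t → dist (g (γ t)) (ψ τ t) ≤ C + τ := by
      intro t ht
      have e1 : dist (γ t) (ψ τ t) = τ := by
        rw [hγψd τ t t hτ.le hτ2 ht ht, sub_self, zero_smul, add_zero, norm_smul, hnw,
          mul_one, Real.norm_eq_abs, zero_sub, abs_neg, abs_of_pos hτ]
      calc dist (g (γ t)) (ψ τ t) ≤ dist (g (γ t)) (γ t) + dist (γ t) (ψ τ t) :=
            dist_triangle _ _ _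
        _ ≤ C + τ := by rw [e1, dist_comm]; linarith [hC t ht]
    have hconv : ∀ t t' : ℝ, 0 ≤ t → 0 ≤ t' →
        dist (g (γ ((t+t')/2))) (ψ τ ((t+t')/2)) ≤
          (dist (g (γ t)) (ψ τ t) + dist (g (γ t')) (ψ τ t'))/2 := by
      intro t t' ht ht'
      have hmid : 0 ≤ (t+t')/2 := by linarith
      have h1 : dist (g (γ t)) (g (γ ((t+t')/2))) = dist (g (γ t)) (g (γ t')) / 2 := by
        rw [g.dist_eq, g.dist_eq, hγ t ((t+t')/2) ht hmid, hγ t t' ht ht']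
        rw [show t - (t+t')/2 = (t - t')/2 by ring, abs_div]
        simp [abs_of_pos]
      have h2 : dist (g (γ ((t+t')/2))) (g (γ t')) = dist (g (γ t)) (g (γ t')) / 2 := by
        rw [g.dist_eq, g.dist_eq, hγ ((t+t')/2) t' hmid ht', hγ t t' ht ht']
        rw [show (t+t')/2 - t' = (t - t')/2 by ring, abs_div]
        simp [abs_of_pos]
      have h3 : dist (ψ τ t) (ψ τ ((t+t')/2)) = dist (ψ τ t) (ψ τ t') / 2 := by
        rw [hψmid τ t ((t+t')/2) hτ.le hτ2 ht hmid, hψmid τ t t' hτ.le hτ2 ht ht']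
        rw [show t - (t+t')/2 = (t - t')/2 by ring, abs_div]
        simp [abs_of_pos]
      have h4 : dist (ψ τ ((t+t')/2)) (ψ τ t') = dist (ψ τ t) (ψ τ t') / 2 := by
        rw [hψmid τ ((t+t')/2) t' hτ.le hτ2 hmid ht', hψmid τ t t' hτ.le hτ2 ht ht']
        rw [show (t+t')/2 - t' = (t - t')/2 by ring, abs_div]
        simp [abs_of_pos]
      have := cat0_mid4 hY h1 h2 h3 h4
      linarith
    have hzero : ∀ t : ℝ, 0 ≤ t → dist (g (γ t)) (ψ τ t) = 0 := by
      have hf0 : dist (g (γ 0)) (ψ τ 0) = 0 := by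
        rw [hψbot τ hτ.le hτ2, ← hs₀, haxis, dist_self]
      have hkey : ∀ n : ℕ, ∀ t : ℝ, 0 ≤ t → dist (g (γ t)) (ψ τ t) ≤ (C + τ)/2^n := by
        intro n
        induction n with
        | zero => intro t ht; simpa using hbound t ht
        | succ n ihn =>
          intro t ht
          have h1 := hconv 0 (2*t) le_rfl (by linarith)
          rw [hf0] at h1
          rw [show ((0:ℝ) + 2*t)/2 = t by ring] at h1
          have h2 := ihn (2*t) (by linarith)
          rw [pow_succ]
          have h2n : (0:ℝ) < 2^n := by positivity
          calc dist (g (γ t)) (ψ τ t) ≤ (0 + dist (g (γ (2*t))) (ψ τ (2*t)))/2 := h1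
            _ ≤ ((C + τ)/2^n)/2 := by linarith
            _ = (C + τ)/(2^n * 2) := by ring
      intro t ht
      rcases le_or_gt (dist (g (γ t)) (ψ τ t)) 0 with h | h
      · exact le_antisymm h dist_nonneg
      · exfalso
        obtain ⟨n, hn⟩ := pow_unbounded_of_one_lt (R := ℝ)
          ((C + τ)/(dist (g (γ t)) (ψ τ t))) one_lt_two
        rw [div_lt_iff₀ h] at hn
        have := hkey n t ht
        have h2n : (0:ℝ) < 2^n := by positivity
        rw [le_div_iff₀ h2n] at this
        nlinarith
    exact fun t ht => dist_eq_zero.mp (hzero t ht)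
  -- the translation relation on the left half of the strip
  have hR1 : ∀ s t : ℝ, 0 ≤ s → s ≤ τ → 0 ≤ t → g (ψ s t) = ψ (s + τ) t := by
    intro s t hs hsτ ht
    have hsr : s + τ ≤ 2*τ := by linarith
    have hsr0 : 0 ≤ s + τ := by linarith
    have hwn : ∀ x : ℝ, ‖x • w + (0:ℝ) • v‖ = |x| := by
      intro x
      rw [zero_smul, add_zero, norm_smul, hnw, mul_one, Real.norm_eq_abs]
    have d1 : dist (ψ τ t) (ψ (s + τ) t) = s := by
      rw [hψd τ t (s+τ) t hτ.le hτ2 ht hsr0 hsr ht, hPtd, sub_self, zero_smul, add_zero,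
        norm_smul, hnw, mul_one, Real.norm_eq_abs, show τ - (s + τ) = -s by ring, abs_neg,
        abs_of_nonneg hs]
    have d2 : dist (ψ (s + τ) t) (ψ (2*τ) t) = τ - s := by
      rw [hψd (s+τ) t (2*τ) t hsr0 hsr ht (by linarith) le_rfl ht, hPtd, sub_self, zero_smul,
        add_zero, norm_smul, hnw, mul_one, Real.norm_eq_abs,
        show s + τ - 2*τ = -(τ - s) by ring, abs_neg, abs_of_nonneg (by linarith)]
    have d3 : dist (ψ τ t) (ψ (2*τ) t) = τ := by
      rw [hψd τ t (2*τ) t hτ.le hτ2 ht (by linarith) le_rfl ht, hPtd, sub_self, zero_smul,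
        add_zero, norm_smul, hnw, mul_one, Real.norm_eq_abs, show τ - 2*τ = -τ by ring,
        abs_neg, abs_of_pos hτ]
    have q1 : dist (ψ τ t) (g (ψ s t)) = s := by
      rw [← hgγψ t ht, g.dist_eq]
      have : dist (γ t) (ψ s t) = s := by
        rw [hγψd s t t hs (by linarith) ht ht, sub_self, zero_smul, add_zero, norm_smul,
          hnw, mul_one, Real.norm_eq_abs, zero_sub, abs_neg, abs_of_nonneg hs]
      exact this
    have q2 : dist (g (ψ s t)) (ψ (2*τ) t) = τ - s := by
      have e0 : ψ (2*τ) t = g (ψ τ t) := by rw [← hgγψ t ht, hψγ2 t ht]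
      rw [e0, g.dist_eq]
      rw [hψd s t τ t hs (by linarith) ht hτ.le hτ2 ht, hPtd, sub_self, zero_smul, add_zero,
        norm_smul, hnw, mul_one, Real.norm_eq_abs, show s - τ = -(τ - s) by ring, abs_neg,
        abs_of_nonneg (by linarith)]
    symm
    apply cat0_between_unique hY (x := ψ τ t) (z := ψ (2*τ) t) (p := ψ (s+τ) t)
      (q := g (ψ s t))
    · rw [d1, d2, d3]; ring
    · rw [q1, d1]
    · rw [q2, d2]
  -- v is not parallel to w
  have hvw : v ≠ w := by
    intro hvweq
    have h1 : φ (γ τ) = φ (c (s₀ + τ)) := by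
      rw [hφγP τ hτ.le, hφmc]
      simp only [hPtdef]
      rw [hvweq]
      module
    have h2 : γ τ = c (s₀ + τ) := hφinj _ (hγH τ hτ.le) _ hcmH h1
    have := hmeet τ hτ.le ⟨s₀ + τ, h2.symm⟩
    linarith
  have hvnw : v ≠ -w := by
    intro hvweq
    have h1 : ψ τ τ = γ 0 := by
      apply hψz τ τ hτ.le hτ2 hτ.le (γ 0) (hγH 0 le_rfl)
      rw [hφγP 0 le_rfl]
      simp only [hPtdef]
      rw [hvweq]
      module
    have h2 : g (γ τ) = γ 0 := by rw [hgγψ τ hτ.le, h1]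
    have h3 : g (c (s₀ - τ)) = γ 0 := by rw [haxis, show s₀ - τ + τ = s₀ by ring, hs₀]
    have h4 : γ τ = c (s₀ - τ) := g.injective (by rw [h2, h3])
    have := hmeet τ hτ.le ⟨s₀ - τ, h4.symm⟩
    linarith
  have hwne : w ≠ 0 := by
    intro h
    rw [h, norm_zero] at hnw
    norm_num at hnw
  have hindep : ∀ x y : ℝ, x • w + y • v = 0 → x = 0 ∧ y = 0 := by
    intro x y hxy
    by_cases hy : y = 0
    · subst hy
      rw [zero_smul, add_zero] at hxy
      rcases smul_eq_zero.mp hxy with h | h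
      · exact ⟨h, rfl⟩
      · exact absurd h hwne
    · exfalso
      have h1 : y • v = -(x • w) := eq_neg_of_add_eq_zero_right hxy
      have h2 : v = (-(x/y)) • w := by
        calc v = y⁻¹ • (y • v) := by rw [smul_smul, inv_mul_cancel₀ hy, one_smul]
          _ = y⁻¹ • (-(x • w)) := by rw [h1]
          _ = (-(x/y)) • w := by
              rw [smul_neg, smul_smul, ← neg_smul]
              congr 1
              field_simp
      have h3 : |(-(x/y))| = 1 := by
        have h4 := congrArg norm h2
        rw [hnv, norm_smul, hnw, mul_one, Real.norm_eq_abs] at h4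
        exact h4.symm
      rcases (abs_eq (le_of_lt one_pos)).mp h3 with h4 | h4
      · rw [h4, one_smul] at h2; exact hvw h2
      · rw [h4, neg_one_smul] at h2; exact hvnw h2
  -- powers of g
  have hG1 : ∀ (n : ℤ) (x : Y), (g ^ (n+1) : Y ≃ᵢ Y) x = (g ^ n : Y ≃ᵢ Y) (g x) := by
    intro n x
    rw [zpow_add_one]
    rfl
  have hgnc : ∀ (n : ℤ) (x : ℝ), (g ^ n : Y ≃ᵢ Y) (c x) = c (x + (n:ℝ) * τ) := by
    intro n
    induction n using Int.induction_on with
    | zero => intro x; simp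
    | succ n ihn =>
      intro x
      rw [hG1 n (c x), haxis, ihn]
      congr 1
      push_cast
      ring
    | pred n ihn =>
      intro x
      have h := hG1 (-(n:ℤ)-1) (c (x - τ))
      rw [show (-(n:ℤ)-1+1) = -(n:ℤ) by ring] at h
      rw [haxis, show x - τ + τ = x by ring] at h
      rw [← h, ihn]
      congr 1
      push_cast
      ring
  -- floor bounds
  have hfloor1 : ∀ s : ℝ, ((⌊s/τ⌋ : ℤ) : ℝ) * τ ≤ s := by
    intro s
    have h := Int.floor_le (s/τ)
    calc ((⌊s/τ⌋ : ℤ) : ℝ) * τ ≤ (s/τ) * τ := mul_le_mul_of_nonneg_right h hτ.le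
      _ = s := by field_simp
  have hfloor2 : ∀ s : ℝ, s < (((⌊s/τ⌋ : ℤ) : ℝ) + 1) * τ := by
    intro s
    have h := Int.lt_floor_add_one (s/τ)
    calc s = (s/τ) * τ := by field_simp
      _ < (((⌊s/τ⌋ : ℤ) : ℝ) + 1) * τ := by
          apply mul_lt_mul_of_pos_right _ hτ
          exact_mod_cast h
  set Ψ : ℝ → ℝ → Y :=
    fun s t => (g ^ (⌊s / τ⌋ : ℤ) : Y ≃ᵢ Y) (ψ (s - ((⌊s / τ⌋ : ℤ) : ℝ) * τ) t) with hΨdef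
  have hLchart : ∀ (n : ℤ) (s t : ℝ), (n:ℝ)*τ ≤ s → s ≤ (n:ℝ)*τ + 2*τ → 0 ≤ t →
      Ψ s t = (g ^ n : Y ≃ᵢ Y) (ψ (s - (n:ℝ)*τ) t) := by
    intro n s t h1 h2 ht
    have hx1 : ((n:ℝ)+1)*τ = (n:ℝ)*τ + τ := by ring
    have hx2 : ((n:ℝ)+2)*τ = (n:ℝ)*τ + 2*τ := by ring
    have hn0l : n ≤ ⌊s/τ⌋ := by
      rw [Int.le_floor, le_div_iff₀ hτ]
      exact h1
    have hn0u : ⌊s/τ⌋ ≤ n + 2 := by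
      have ha2 := Int.floor_le (s/τ)
      have hx : s/τ ≤ (n:ℝ) + 2 := by rw [div_le_iff₀ hτ]; linarith
      have hy : ((⌊s/τ⌋:ℤ):ℝ) ≤ ((n:ℤ):ℝ) + 2 := le_trans ha2 hx
      exact_mod_cast hy
    have hcase : ⌊s/τ⌋ = n ∨ ⌊s/τ⌋ = n+1 ∨ ⌊s/τ⌋ = n+2 := by omega
    rcases hcase with h0 | h0 | h0
    · simp only [hΨdef, h0]
    · have hfl := hfloor1 s
      rw [h0] at hfl
      push_cast at hfl
      have hl : ((n:ℝ)+1)*τ ≤ s := by linarith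
      have hr : s - ((n:ℝ)+1)*τ ≤ τ := by linarith
      have hR := hR1 (s - ((n:ℝ)+1)*τ) t (by linarith) hr ht
      rw [show s - ((n:ℝ)+1)*τ + τ = s - (n:ℝ)*τ by ring] at hR
      simp only [hΨdef, h0]
      push_cast
      rw [hG1 n, hR]
    · have hfl := hfloor1 s
      rw [h0] at hfl
      push_cast at hfl
      have hseq2 : s = ((n:ℝ)+2)*τ := by linarith
      have harg1 : s - ((n:ℝ)+2)*τ = 0 := by rw [hseq2]; ring
      have harg2 : s - (n:ℝ)*τ = τ + τ := by rw [hseq2]; ring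
      have hRa := hR1 0 t le_rfl hτ.le ht
      rw [zero_add] at hRa
      have hRb := hR1 τ t hτ.le le_rfl ht
      simp only [hΨdef, h0]
      push_cast
      rw [harg1, harg2]
      rw [show ((n:ℤ)+2) = ((n:ℤ)+1)+1 by ring, hG1 (n+1), hG1 n, hRa, hRb]
  -- nearby points of the glued strip
  have hLnear : ∀ s1 t1 s2 t2 : ℝ, |s1 - s2| ≤ τ → 0 ≤ t1 → 0 ≤ t2 →
      dist (Ψ s1 t1) (Ψ s2 t2) = ‖(s1 - s2) • w + (t1 - t2) • v‖ := by
    have aux : ∀ s1 t1 s2 t2 : ℝ, s1 ≤ s2 → s2 - s1 ≤ τ → 0 ≤ t1 → 0 ≤ t2 →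
        dist (Ψ s1 t1) (Ψ s2 t2) = ‖(s1 - s2) • w + (t1 - t2) • v‖ := by
      intro s1 t1 s2 t2 h12 hd ht1 ht2
      set n : ℤ := ⌊s1/τ⌋ with hn
      have hf1 := hfloor1 s1
      have hf2 := hfloor2 s1
      have hx1 : ((n:ℝ)+1)*τ = (n:ℝ)*τ + τ := by ring
      have e1 : Ψ s1 t1 = (g ^ n : Y ≃ᵢ Y) (ψ (s1 - (n:ℝ)*τ) t1) :=
        hLchart n s1 t1 hf1 (by linarith) ht1
      have e2 : Ψ s2 t2 = (g ^ n : Y ≃ᵢ Y) (ψ (s2 - (n:ℝ)*τ) t2) :=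
        hLchart n s2 t2 (by linarith) (by linarith) ht2
      rw [e1, e2, IsometryEquiv.dist_eq]
      rw [hψd (s1 - (n:ℝ)*τ) t1 (s2 - (n:ℝ)*τ) t2 (by linarith) (by linarith) ht1
        (by linarith) (by linarith) ht2, hPtd]
      rw [show s1 - (n:ℝ)*τ - (s2 - (n:ℝ)*τ) = s1 - s2 by ring]
    intro s1 t1 s2 t2 hd ht1 ht2
    rcases le_total s1 s2 with h | h
    · apply aux s1 t1 s2 t2 h _ ht1 ht2
      rw [abs_sub_comm, abs_of_nonneg (by linarith)] at hd
      exact hd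
    · rw [dist_comm, aux s2 t2 s1 t1 h (by rw [abs_of_nonneg (by linarith)] at hd; exact hd)
        ht2 ht1]
      rw [show (s2 - s1) • w + (t2 - t1) • v = -((s1 - s2) • w + (t1 - t2) • v) by module,
        norm_neg]
  -- bottom of the glued strip
  have hΨbot : ∀ s : ℝ, Ψ s 0 = c (s₀ + s) := by
    intro s
    have hf1 := hfloor1 s
    have hf2 := hfloor2 s
    have hx1 : (((⌊s/τ⌋ : ℤ):ℝ)+1)*τ = ((⌊s/τ⌋ : ℤ):ℝ)*τ + τ := by ring
    rw [hLchart ⌊s/τ⌋ s 0 hf1 (by linarith) le_rfl]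
    rw [hψbot _ (by linarith) (by linarith), hgnc]
    congr 1
    ring
  -- the glued map is an isometry onto the half plane
  have hΨiso : ∀ s t s' t' : ℝ, 0 ≤ t → 0 ≤ t' →
      dist (Ψ s t) (Ψ s' t') = ‖(s - s') • w + (t - t') • v‖ := by
    intro s t s' t' ht ht'
    rcases eq_or_ne ((s - s') • w + (t - t') • v) 0 with hX0 | hX0
    · obtain ⟨hs0, ht0⟩ := hindep _ _ hX0
      have hss : s = s' := by linarith
      have htt : t = t' := by linarith
      rw [hss, htt]
      simp
    · have hL : 0 < ‖(s - s') • w + (t - t') • v‖ := norm_pos_iff.mpr hX0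
      set L : ℝ := ‖(s - s') • w + (t - t') • v‖ with hLdef
      obtain ⟨N, hN⟩ := exists_nat_gt (2*|s - s'|/τ + 1)
      have hNpos : (0:ℝ) < (N:ℝ) := by
        have h1 : (0:ℝ) ≤ 2*|s - s'|/τ := by positivity
        linarith
      have hNne : ((N:ℝ)) ≠ 0 := ne_of_gt hNpos
      have hNs : 2*|s - s'| ≤ (N:ℝ) * τ := by
        have h2 : 2*|s - s'|/τ < (N:ℝ) := by linarith
        rw [div_lt_iff₀ hτ] at h2
        linarith
      have hθ : ∀ k : ℕ, k ≤ N → 0 ≤ t + ((k:ℝ)/N) * (t' - t) := by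
        intro k hk
        have h0k : 0 ≤ (k:ℝ)/N := by positivity
        have h1k : (k:ℝ)/N ≤ 1 := by
          rw [div_le_one hNpos]
          exact_mod_cast hk
        nlinarith [mul_nonneg (sub_nonneg.mpr h1k) ht, mul_nonneg h0k ht']
      have hgen : ∀ k m : ℕ, (m:ℝ) - (k:ℝ) ≤ 2 → k ≤ N → m ≤ N → k ≤ m →
          dist (Ψ (s + ((k:ℝ)/N)*(s'-s)) (t + ((k:ℝ)/N)*(t'-t)))
            (Ψ (s + ((m:ℝ)/N)*(s'-s)) (t + ((m:ℝ)/N)*(t'-t)))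
            = (((m:ℝ)-(k:ℝ))/N) * L := by
        intro k m hm2 hkN hmN hkm
        have hmk0 : (0:ℝ) ≤ (m:ℝ) - (k:ℝ) := by
          have : (k:ℝ) ≤ (m:ℝ) := by exact_mod_cast hkm
          linarith
        have hd : |(s + ((k:ℝ)/N)*(s'-s)) - (s + ((m:ℝ)/N)*(s'-s))| ≤ τ := by
          rw [show (s + ((k:ℝ)/N)*(s'-s)) - (s + ((m:ℝ)/N)*(s'-s))
              = (((k:ℝ)-(m:ℝ))/N)*(s'-s) by ring]
          rw [abs_mul, abs_div, abs_of_pos hNpos]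
          rw [div_mul_eq_mul_div, div_le_iff₀ hNpos]
          have hkm' : |(k:ℝ)-(m:ℝ)| ≤ 2 := by
            rw [abs_sub_comm, abs_of_nonneg hmk0]
            exact hm2
          calc |(k:ℝ)-(m:ℝ)| * |s' - s| ≤ 2 * |s' - s| :=
                mul_le_mul_of_nonneg_right hkm' (abs_nonneg _)
            _ ≤ τ * (N:ℝ) := by rw [abs_sub_comm]; linarith [hNs]
        rw [hLnear _ _ _ _ hd (hθ k hkN) (hθ m hmN)]
        rw [show (s + ((k:ℝ)/N)*(s'-s)) - (s + ((m:ℝ)/N)*(s'-s))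
            = (((m:ℝ)-(k:ℝ))/N)*(s - s') by ring,
          show (t + ((k:ℝ)/N)*(t'-t)) - (t + ((m:ℝ)/N)*(t'-t))
            = (((m:ℝ)-(k:ℝ))/N)*(t - t') by ring]
        rw [show ((((m:ℝ)-(k:ℝ))/N)*(s - s')) • w + ((((m:ℝ)-(k:ℝ))/N)*(t - t')) • v
            = (((m:ℝ)-(k:ℝ))/N) • ((s - s') • w + (t - t') • v) by module]
        rw [norm_smul, Real.norm_eq_abs,
          abs_of_nonneg (div_nonneg hmk0 hNpos.le), ← hLdef]
      have hchain := cat0_chain hY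
        (fun k : ℕ => Ψ (s + ((k:ℝ)/N)*(s'-s)) (t + ((k:ℝ)/N)*(t'-t))) (L/N) N ?_ ?_
      · have hfin : dist (Ψ (s + (((0:ℕ):ℝ)/N)*(s'-s)) (t + (((0:ℕ):ℝ)/N)*(t'-t)))
            (Ψ (s + (((N:ℕ):ℝ)/N)*(s'-s)) (t + (((N:ℕ):ℝ)/N)*(t'-t))) = (N:ℝ)*(L/N) := hchain
        rw [show s + (((0:ℕ):ℝ)/N)*(s'-s) = s by norm_num,
          show t + (((0:ℕ):ℝ)/N)*(t'-t) = t by norm_num,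
          show s + (((N:ℕ):ℝ)/N)*(s'-s) = s' by rw [div_self hNne]; ring,
          show t + (((N:ℕ):ℝ)/N)*(t'-t) = t' by rw [div_self hNne]; ring] at hfin
        rw [hfin]
        field_simp
      · intro k hk
        show dist (Ψ (s + ((k:ℝ)/N)*(s'-s)) (t + ((k:ℝ)/N)*(t'-t)))
          (Ψ (s + (((k+1:ℕ):ℝ)/N)*(s'-s)) (t + (((k+1:ℕ):ℝ)/N)*(t'-t))) = L/N
        rw [hgen k (k+1) (by push_cast; linarith) (by omega) (by omega) (by omega)]
        push_cast
        ring
      · intro k hk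
        show dist (Ψ (s + ((k:ℝ)/N)*(s'-s)) (t + ((k:ℝ)/N)*(t'-t)))
          (Ψ (s + (((k+2:ℕ):ℝ)/N)*(s'-s)) (t + (((k+2:ℕ):ℝ)/N)*(t'-t))) = 2*(L/N)
        rw [hgen k (k+2) (by push_cast; linarith) (by omega) (by omega) (by omega)]
        push_cast
        ring
  -- coordinates in the plane
  have hcoordnorm : ∀ x : EuclideanSpace ℝ (Fin 2), ‖x‖ = Real.sqrt ((x 0)^2 + (x 1)^2) := by
    intro x
    rw [EuclideanSpace.norm_eq, Fin.sum_univ_two]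
    simp [Real.norm_eq_abs, sq_abs]
  have hw2 : (w 0)^2 + (w 1)^2 = 1 := by
    have h := hcoordnorm w
    rw [hnw] at h
    exact Real.sqrt_eq_one.mp h.symm
  set pp : EuclideanSpace ℝ (Fin 2) := (WithLp.equiv 2 (Fin 2 → ℝ)).symm ![-(w 1), w 0]
    with hppdef
  have hpp0 : pp 0 = -(w 1) := rfl
  have hpp1 : pp 1 = w 0 := rfl
  set al : ℝ := v 0 * w 0 + v 1 * w 1 with haldef
  set be : ℝ := v 1 * w 0 - v 0 * w 1 with hbedef
  have hWP : ∀ x y : ℝ, ‖x • w + y • pp‖ = Real.sqrt (x^2 + y^2) := by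
    intro x y
    rw [hcoordnorm]
    have e0 : (x • w + y • pp) 0 = x * w 0 + y * (-(w 1)) := by
      simp only [PiLp.add_apply, PiLp.smul_apply, hpp0, smul_eq_mul]
    have e1 : (x • w + y • pp) 1 = x * w 1 + y * w 0 := by
      simp only [PiLp.add_apply, PiLp.smul_apply, hpp1, smul_eq_mul]
    rw [e0, e1]
    congr 1
    linear_combination (x^2 + y^2) * hw2
  have hvdec : v = al • w + be • pp := by
    ext i
    fin_cases i
    · show v 0 = (al • w + be • pp) 0
      simp only [PiLp.add_apply, PiLp.smul_apply, hpp0, smul_eq_mul,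
        haldef, hbedef]
      linear_combination (-(v 0)) * hw2
    · show v 1 = (al • w + be • pp) 1
      simp only [PiLp.add_apply, PiLp.smul_apply, hpp1, smul_eq_mul,
        haldef, hbedef]
      linear_combination (-(v 1)) * hw2
  have hbene : be ≠ 0 := by
    intro hbe0
    have h2 : v = al • w := by rw [hvdec, hbe0, zero_smul, add_zero]
    have h3 : |al| = 1 := by
      have h4 := congrArg norm h2
      rw [hnv, norm_smul, hnw, mul_one, Real.norm_eq_abs] at h4
      exact h4.symm
    rcases (abs_eq (le_of_lt one_pos)).mp h3 with h4 | h4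
    · rw [h4, one_smul] at h2; exact hvw h2
    · rw [h4, neg_one_smul] at h2; exact hvnw h2
  have hbeabs : 0 < |be| := abs_pos.mpr hbene
  have hcomb : ∀ x y : ℝ, ‖x • w + y • v‖ = Real.sqrt ((x + y*al)^2 + (y*be)^2) := by
    intro x y
    rw [show x • w + y • v = (x + y*al) • w + (y*be) • pp by rw [hvdec]; module, hWP]
  -- the flat half-plane
  apply hangle 0
  refine ⟨1, fun uu => Ψ (uu 0 - s₀ - (uu 1 / |be|) * al) (uu 1 / |be|), one_pos, ?_, ?_⟩
  · intro uu vv hu hv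
    show dist (Ψ (uu 0 - s₀ - (uu 1 / |be|) * al) (uu 1 / |be|))
      (Ψ (vv 0 - s₀ - (vv 1 / |be|) * al) (vv 1 / |be|)) = dist uu vv
    rw [hΨiso _ _ _ _ (by positivity) (by positivity)]
    rw [hcomb]
    rw [EuclideanSpace.dist_eq, Fin.sum_univ_two]
    simp only [Real.dist_eq, sq_abs]
    congr 1
    · congr 1
      · ring
      · rw [show (uu 1 / |be| - vv 1 / |be|) * be = (uu 1 - vv 1) * (be / |be|) by ring]
        rw [mul_pow, div_pow, sq_abs, div_self (by positivity : be^2 ≠ 0), mul_one]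
  · intro t _
    show Ψ ((((WithLp.equiv 2 (Fin 2 → ℝ)).symm ![t, 0] : EuclideanSpace ℝ (Fin 2)) 0) - s₀
        - ((((WithLp.equiv 2 (Fin 2 → ℝ)).symm ![t, 0] : EuclideanSpace ℝ (Fin 2)) 1) / |be|) * al)
      ((((WithLp.equiv 2 (Fin 2 → ℝ)).symm ![t, 0] : EuclideanSpace ℝ (Fin 2)) 1) / |be|) = c t
    have hc0 : (((WithLp.equiv 2 (Fin 2 → ℝ)).symm ![t, 0] : EuclideanSpace ℝ (Fin 2)) 0) = t := rfl
    have hc1 : (((WithLp.equiv 2 (Fin 2 → ℝ)).symm ![t, 0] : EuclideanSpace ℝ (Fin 2)) 1) = 0 := rfl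
    rw [hc0, hc1, zero_div, zero_mul, sub_zero, hΨbot]
    congr 1
    ring
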